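/- Weight-recycling version controls recent-FDR deterministically in the self-consistency sense: if at stage t the rejection set R_t ∩ C_t is the largest subset S of C_t with P_i ≤ α·max(1,|S|)·A_i for all i ∈ S, and each null P_i is independent super-uniform with the weights A_i deterministic and ∑_{i∈C_t} A_i ≤ 1, then under the positive-dependence condition (P(max(1,|R_t∩C_t|) ≤ r | P_i ≤ u) nondecreasing in u for each null i ∈ C_t and each r), E[|H_0 ∩ R_t ∩ C_t| / max(1,|R_t ∩ C_t|)] ≤ α. -/

import Mathlib

open MeasureTheory Finset
open scoped ENNReal

/-- Abstract telescoping lemma (standard PRDS/BH argument). -/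
lemma aux_key {Ω : Type*} [MeasurableSpace Ω] (μ : Measure Ω) [IsProbabilityMeasure μ]
    (N : ℕ) (A B : ℕ → Set Ω)
    (hAmeas : ∀ r, MeasurableSet (A r)) (hBmeas : ∀ r, MeasurableSet (B r))
    (hAmono : ∀ r, A r ⊆ A (r+1)) (hBmono : ∀ r, B r ⊆ B (r+1))
    (c : ℝ) (hc : 0 ≤ c)
    (hp : ∀ r : ℕ, μ (A r) ≤ ENNReal.ofReal (c * r))
    (hpos : ∀ r j : ℕ, μ (A j) ≠ 0 →
      μ (B r ∩ A j) / μ (A j) ≤ μ (B r ∩ A (j+1)) / μ (A (j+1))) :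
    ∑ j ∈ Finset.range N, (1/((j:ℝ)+1)) * (μ ((B (j+1) \ B j) ∩ A (j+1))).toReal ≤ c := by
  set q : ℕ → ℝ≥0∞ := fun r => μ (B r ∩ A r) / μ (A r) with hqdef
  have hq1 : ∀ r, q r ≤ 1 := by
    intro r
    apply ENNReal.div_le_of_le_mul
    rw [one_mul]
    exact measure_mono Set.inter_subset_right
  have hqtop : ∀ r, q r ≠ ⊤ := fun r => ne_top_of_le_ne_top ENNReal.one_ne_top (hq1 r)
  have hqzero : ∀ r, μ (A r) = 0 → q r = 0 := by
    intro r h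
    have : μ (B r ∩ A r) = 0 := le_antisymm (h ▸ measure_mono Set.inter_subset_right) (zero_le)
    simp [hqdef, this]
  have hqmono : ∀ r, q r ≤ q (r+1) := by
    intro r
    by_cases h1 : μ (A (r+1)) = 0
    · have h0 : μ (A r) = 0 :=
        le_antisymm (h1 ▸ measure_mono (hAmono r)) (zero_le)
      rw [hqzero r h0, hqzero (r+1) h1]
    by_cases h0 : μ (A r) = 0
    · rw [hqzero r h0]; exact zero_le
    calc q r ≤ μ (B r ∩ A (r+1)) / μ (A (r+1)) := hpos r r h0
      _ ≤ q (r+1) := ENNReal.div_le_div_right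
          (measure_mono (Set.inter_subset_inter_left _ (hBmono r))) _
  set Q : ℕ → ℝ := fun r => (q r).toReal with hQdef
  have hQmono : ∀ r, Q r ≤ Q (r+1) := fun r =>
    ENNReal.toReal_mono (hqtop _) (hqmono r)
  have hQ1 : ∀ r, Q r ≤ 1 := by
    intro r
    have := ENNReal.toReal_mono ENNReal.one_ne_top (hq1 r)
    simpa using this
  have hQ0 : ∀ r, 0 ≤ Q r := fun r => ENNReal.toReal_nonneg
  have key : ∀ j : ℕ, (1/((j:ℝ)+1)) * (μ ((B (j+1) \ B j) ∩ A (j+1))).toReal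
      ≤ c * (Q (j+1) - Q j) := by
    intro j
    by_cases hp0 : μ (A (j+1)) = 0
    · have hz : μ ((B (j+1) \ B j) ∩ A (j+1)) = 0 :=
        le_antisymm (hp0 ▸ measure_mono Set.inter_subset_right) (zero_le)
      have hzj : μ (A j) = 0 :=
        le_antisymm (hp0 ▸ measure_mono (hAmono j)) (zero_le)
      rw [hz]
      simp only [ENNReal.toReal_zero, mul_zero]
      have : Q j ≤ Q (j+1) := hQmono j
      nlinarith
    · have hfin : μ (A (j+1)) ≠ ⊤ := measure_ne_top μ _
      have hsplit : (B (j+1) \ B j) ∩ A (j+1)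
          = (B (j+1) ∩ A (j+1)) \ (B j ∩ A (j+1)) := by
        ext x; simp only [Set.mem_inter_iff, Set.mem_diff]; tauto
      have hsubBA : B j ∩ A (j+1) ⊆ B (j+1) ∩ A (j+1) :=
        Set.inter_subset_inter_left _ (hBmono j)
      have hdiff : μ ((B (j+1) \ B j) ∩ A (j+1))
          = μ (B (j+1) ∩ A (j+1)) - μ (B j ∩ A (j+1)) := by
        rw [hsplit]
        exact measure_diff hsubBA ((hBmeas j).inter (hAmeas (j+1))).nullMeasurableSet
          (measure_ne_top μ _)
      have hdiffR : (μ ((B (j+1) \ B j) ∩ A (j+1))).toReal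
          = (μ (B (j+1) ∩ A (j+1))).toReal - (μ (B j ∩ A (j+1))).toReal := by
        rw [hdiff]
        exact ENNReal.toReal_sub_of_le (measure_mono hsubBA) (measure_ne_top μ _)
      have hupper : (μ (B (j+1) ∩ A (j+1))).toReal = Q (j+1) * (μ (A (j+1))).toReal := by
        have : q (j+1) * μ (A (j+1)) = μ (B (j+1) ∩ A (j+1)) := by
          rw [hqdef]
          exact ENNReal.div_mul_cancel hp0 hfin
        rw [← this, ENNReal.toReal_mul]
      have hlower : Q j * (μ (A (j+1))).toReal ≤ (μ (B j ∩ A (j+1))).toReal := by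
        by_cases hpj : μ (A j) = 0
        · rw [hQdef]
          simp only [hqzero j hpj, ENNReal.toReal_zero, zero_mul]
          exact ENNReal.toReal_nonneg
        · have h1 : q j ≤ μ (B j ∩ A (j+1)) / μ (A (j+1)) := hpos j j hpj
          have h2 : q j * μ (A (j+1)) ≤ μ (B j ∩ A (j+1)) := by
            calc q j * μ (A (j+1)) ≤ (μ (B j ∩ A (j+1)) / μ (A (j+1))) * μ (A (j+1)) :=
                  mul_le_mul_left h1 _
              _ = μ (B j ∩ A (j+1)) := ENNReal.div_mul_cancel hp0 hfin
          calc Q j * (μ (A (j+1))).toReal = (q j * μ (A (j+1))).toReal := by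
                rw [ENNReal.toReal_mul]
            _ ≤ (μ (B j ∩ A (j+1))).toReal := ENNReal.toReal_mono (measure_ne_top μ _) h2
      have hpA : (μ (A (j+1))).toReal ≤ c * (j+1) := by
        have h1 : μ (A (j+1)) ≤ ENNReal.ofReal (c * (j+1)) := by
          have := hp (j+1); push_cast at this ⊢; exact this
        have h2 : (0:ℝ) ≤ c * (j+1) := by positivity
        calc (μ (A (j+1))).toReal ≤ (ENNReal.ofReal (c * (j+1))).toReal :=
              ENNReal.toReal_mono ENNReal.ofReal_ne_top h1
          _ = c * (j+1) := ENNReal.toReal_ofReal h2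
      have hX : (μ ((B (j+1) \ B j) ∩ A (j+1))).toReal
          ≤ (Q (j+1) - Q j) * (μ (A (j+1))).toReal := by
        rw [hdiffR, hupper]
        nlinarith [hlower]
      have hjpos : (0:ℝ) < (j:ℝ) + 1 := by positivity
      rw [one_div, inv_mul_le_iff₀ hjpos]
      have hd : 0 ≤ Q (j+1) - Q j := by have := hQmono j; linarith
      have hpAnn : 0 ≤ (μ (A (j+1))).toReal := ENNReal.toReal_nonneg
      nlinarith [hX, hpA, hd, hpAnn]
  calc ∑ j ∈ Finset.range N, (1/((j:ℝ)+1)) * (μ ((B (j+1) \ B j) ∩ A (j+1))).toReal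
      ≤ ∑ j ∈ Finset.range N, c * (Q (j+1) - Q j) :=
        Finset.sum_le_sum (fun j _ => key j)
    _ = c * (Q N - Q 0) := by rw [← Finset.mul_sum, Finset.sum_range_sub]
    _ ≤ c := by nlinarith [hQ1 N, hQ0 0]


/-- The weight-recycling (decaying-memory) version controls the recent FDR:
if at stage `t` the rejection set within the active window, `R_t ∩ C_t`, is
the largest subset `S` of `C_t` with `P_i ≤ α·max(1,|S|)·A_i` for all
`i ∈ S`, the weights `A_i` are deterministic with `∑_{i ∈ C_t} A_i ≤ 1`,
each null `P_i` is super-uniform, and the positive-dependence condition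
holds (`P(max(1,|R_t ∩ C_t|) ≤ r | P_i ≤ u)` nondecreasing in `u` for each
null `i ∈ C_t` and each `r`), then
`E[|H₀ ∩ R_t ∩ C_t| / max(1,|R_t ∩ C_t|)] ≤ α`. -/
theorem recycling_recent_fdr_control
    {Ω : Type*} [MeasurableSpace Ω] (μ : Measure Ω) [IsProbabilityMeasure μ]
    (t : ℕ) (C : Finset ℕ) (hC : C ⊆ Finset.Icc 1 t)
    (A : ℕ → ℝ) (hA : ∀ i, 0 ≤ A i) (hAsum : ∑ i ∈ C, A i ≤ 1)
    (H0 : Finset ℕ) (α : ℝ) (hα : α ∈ Set.Ioo (0 : ℝ) 1)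
    (P : ℕ → Ω → ℝ) (hPmeas : ∀ i, Measurable (P i))
    (hrange : ∀ i ω, P i ω ∈ Set.Icc (0 : ℝ) 1)
    (hsup : ∀ i ∈ H0 ∩ C, ∀ u : ℝ, 0 ≤ u → u ≤ 1 →
      μ {ω | P i ω ≤ u} ≤ ENNReal.ofReal u)
    (Rc : Ω → Finset ℕ)
    (hRmeas : ∀ S : Finset ℕ, MeasurableSet {ω | Rc ω = S})
    (hRsub : ∀ ω, Rc ω ⊆ C)
    (hsc : ∀ ω, ∀ i ∈ Rc ω, P i ω ≤ α * (max 1 (Rc ω).card : ℝ) * A i)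
    (hmax : ∀ ω, ∀ S ⊆ C, (∀ i ∈ S, P i ω ≤ α * (max 1 S.card : ℝ) * A i) →
      S ⊆ Rc ω)
    (hposdep : ∀ i ∈ H0 ∩ C, ∀ r : ℕ, ∀ u v : ℝ, 0 ≤ u → u ≤ v → v ≤ 1 →
      μ {ω | P i ω ≤ u} ≠ 0 →
      μ ({ω | max 1 (Rc ω).card ≤ r} ∩ {ω | P i ω ≤ u}) / μ {ω | P i ω ≤ u}
        ≤ μ ({ω | max 1 (Rc ω).card ≤ r} ∩ {ω | P i ω ≤ v}) / μ {ω | P i ω ≤ v}) :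
    ∫ ω, ((H0 ∩ Rc ω).card : ℝ) / (max 1 (Rc ω).card : ℝ) ∂μ ≤ α := by
  classical
  obtain ⟨hα0, hα1⟩ := hα
  set N : ℕ := max 1 C.card with hNdef
  -- measurability of events defined through Rc
  have hT : ∀ T : Finset (Finset ℕ), MeasurableSet {ω | Rc ω ∈ T} := by
    intro T
    have : {ω | Rc ω ∈ T} = ⋃ S ∈ T, {ω | Rc ω = S} := by
      ext ω; simp
    rw [this]
    exact T.measurableSet_biUnion (fun S _ => hRmeas S)
  have hBmeas : ∀ r : ℕ, MeasurableSet {ω | max 1 (Rc ω).card ≤ r} := by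
    intro r
    have : {ω | max 1 (Rc ω).card ≤ r}
        = {ω | Rc ω ∈ C.powerset.filter (fun S => max 1 S.card ≤ r)} := by
      ext ω
      simp only [Set.mem_setOf_eq, Finset.mem_filter, Finset.mem_powerset]
      exact ⟨fun h => ⟨hRsub ω, h⟩, fun h => h.2⟩
    rw [this]; exact hT _
  have hEmeas : ∀ (i r : ℕ), MeasurableSet {ω | i ∈ Rc ω ∧ max 1 (Rc ω).card = r} := by
    intro i r
    have : {ω | i ∈ Rc ω ∧ max 1 (Rc ω).card = r}
        = {ω | Rc ω ∈ C.powerset.filter (fun S => i ∈ S ∧ max 1 S.card = r)} := by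
      ext ω
      simp only [Set.mem_setOf_eq, Finset.mem_filter, Finset.mem_powerset]
      exact ⟨fun h => ⟨hRsub ω, h⟩, fun h => h.2⟩
    rw [this]; exact hT _
  -- pointwise decomposition
  have hptws : ∀ ω, ((H0 ∩ Rc ω).card : ℝ) / (max 1 (Rc ω).card : ℝ)
      = ∑ i ∈ H0 ∩ C, ∑ j ∈ Finset.range N,
          Set.indicator {ω' | i ∈ Rc ω' ∧ max 1 (Rc ω').card = j+1}
            (fun _ => 1/((j:ℝ)+1)) ω := by
    intro ω
    have hsub : H0 ∩ Rc ω = (H0 ∩ C).filter (fun i => i ∈ Rc ω) := by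
      ext a
      simp only [Finset.mem_inter, Finset.mem_filter]
      exact ⟨fun h => ⟨⟨h.1, hRsub ω h.2⟩, h.2⟩, fun h => ⟨h.1.1, h.2⟩⟩
    rw [hsub, Finset.card_filter]
    push_cast
    rw [Finset.sum_div]
    apply Finset.sum_congr rfl
    intro i _
    by_cases hiR : i ∈ Rc ω
    · rw [if_pos hiR]
      have hM1 : 1 ≤ (Rc ω).card := Finset.card_pos.2 ⟨i, hiR⟩
      have hMN : (Rc ω).card ≤ N :=
        le_trans (Finset.card_le_card (hRsub ω)) (le_max_right 1 _)
      have hMeq : max 1 (Rc ω).card = (Rc ω).card := max_eq_right hM1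
      rw [Finset.sum_eq_single_of_mem ((Rc ω).card - 1)]
      · have hmem : ω ∈ {ω' | i ∈ Rc ω' ∧ max 1 (Rc ω').card = (Rc ω).card - 1 + 1} := by
          constructor
          · exact hiR
          · omega
        rw [Set.indicator_of_mem hmem]
        have hcast : (((Rc ω).card - 1 : ℕ) : ℝ) + 1 = (max 1 (Rc ω).card : ℝ) := by
          have h3 : ((Rc ω).card - 1) + 1 = max 1 (Rc ω).card := by omega
          exact_mod_cast h3
        rw [hcast]
      · exact Finset.mem_range.2 (by omega)
      · intro j _ hj
        apply Set.indicator_of_notMem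
        intro hmem
        have h2 := hmem.2
        exact hj (by omega)
    · rw [if_neg hiR, zero_div]
      refine (Finset.sum_eq_zero ?_).symm
      intro j _
      apply Set.indicator_of_notMem
      intro hmem
      exact hiR hmem.1
  -- compute integral
  have hint : ∫ ω, ((H0 ∩ Rc ω).card : ℝ) / (max 1 (Rc ω).card : ℝ) ∂μ
      = ∑ i ∈ H0 ∩ C, ∑ j ∈ Finset.range N,
          (1/((j:ℝ)+1)) * (μ {ω | i ∈ Rc ω ∧ max 1 (Rc ω).card = j+1}).toReal := by
    have hintegr : ∀ i j : ℕ,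
        Integrable (Set.indicator {ω' | i ∈ Rc ω' ∧ max 1 (Rc ω').card = j+1}
          (fun _ => 1/((j:ℝ)+1))) μ :=
      fun i j => (integrable_const _).indicator (hEmeas i (j+1))
    simp only [hptws]
    rw [integral_finset_sum _ (fun i _ =>
      integrable_finset_sum _ (fun j _ => hintegr i j))]
    apply Finset.sum_congr rfl
    intro i _
    rw [integral_finset_sum _ (fun j _ => hintegr i j)]
    apply Finset.sum_congr rfl
    intro j _
    rw [integral_indicator_const _ (hEmeas i (j+1))]
    rw [smul_eq_mul, mul_comm]
    rfl
  rw [hint]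
  -- per-hypothesis bound
  have hper : ∀ i ∈ H0 ∩ C,
      ∑ j ∈ Finset.range N,
        (1/((j:ℝ)+1)) * (μ {ω | i ∈ Rc ω ∧ max 1 (Rc ω).card = j+1}).toReal
      ≤ α * A i := by
    intro i hi
    set u : ℕ → ℝ := fun r => min (α * r * A i) 1 with hudef
    have hu0 : ∀ r, 0 ≤ u r := fun r =>
      le_min (mul_nonneg (mul_nonneg hα0.le (Nat.cast_nonneg r)) (hA i)) zero_le_one
    have hu1 : ∀ r, u r ≤ 1 := fun r => min_le_right _ _
    have humono : ∀ r : ℕ, u r ≤ u (r+1) := by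
      intro r
      apply min_le_min _ le_rfl
      push_cast
      nlinarith [mul_nonneg hα0.le (hA i)]
    have hsubE : ∀ j : ℕ, {ω | i ∈ Rc ω ∧ max 1 (Rc ω).card = j+1}
        ⊆ ({ω | max 1 (Rc ω).card ≤ j+1} \ {ω | max 1 (Rc ω).card ≤ j})
          ∩ {ω | P i ω ≤ u (j+1)} := by
      intro j ω hω
      obtain ⟨hiR, hM⟩ := hω
      refine ⟨⟨le_of_eq hM, by simp only [Set.mem_setOf_eq]; omega⟩, ?_⟩
      have h1 := hsc ω i hiR
      have hcast : (max (1:ℝ) ((Rc ω).card : ℝ)) = (((j:ℕ)+1 : ℕ) : ℝ) := by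
        exact_mod_cast hM
      rw [hcast] at h1
      exact le_min h1 (hrange i ω).2
    have h1 : ∀ j : ℕ, (μ {ω | i ∈ Rc ω ∧ max 1 (Rc ω).card = j+1}).toReal
        ≤ (μ (({ω | max 1 (Rc ω).card ≤ j+1} \ {ω | max 1 (Rc ω).card ≤ j})
            ∩ {ω | P i ω ≤ u (j+1)})).toReal := fun j =>
      ENNReal.toReal_mono (measure_ne_top μ _) (measure_mono (hsubE j))
    calc ∑ j ∈ Finset.range N,
          (1/((j:ℝ)+1)) * (μ {ω | i ∈ Rc ω ∧ max 1 (Rc ω).card = j+1}).toReal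
        ≤ ∑ j ∈ Finset.range N,
          (1/((j:ℝ)+1)) * (μ (({ω | max 1 (Rc ω).card ≤ j+1} \ {ω | max 1 (Rc ω).card ≤ j})
            ∩ {ω | P i ω ≤ u (j+1)})).toReal := by
          apply Finset.sum_le_sum
          intro j _
          exact mul_le_mul_of_nonneg_left (h1 j) (by positivity)
      _ ≤ α * A i := by
          have hp' : ∀ r : ℕ, μ {ω | P i ω ≤ u r} ≤ ENNReal.ofReal ((α * A i) * r) := by
            intro r
            calc μ {ω | P i ω ≤ u r} ≤ ENNReal.ofReal (u r) :=
                  hsup i hi (u r) (hu0 r) (hu1 r)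
              _ ≤ ENNReal.ofReal ((α * A i) * r) := by
                  apply ENNReal.ofReal_le_ofReal
                  calc u r ≤ α * r * A i := min_le_left _ _
                    _ = (α * A i) * r := by ring
          have hpos' : ∀ r j : ℕ, μ {ω | P i ω ≤ u j} ≠ 0 →
              μ ({ω | max 1 (Rc ω).card ≤ r} ∩ {ω | P i ω ≤ u j}) / μ {ω | P i ω ≤ u j}
                ≤ μ ({ω | max 1 (Rc ω).card ≤ r} ∩ {ω | P i ω ≤ u (j+1)})
                    / μ {ω | P i ω ≤ u (j+1)} :=
            fun r j hne => hposdep i hi r (u j) (u (j+1)) (hu0 j) (humono j) (hu1 (j+1)) hne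
          exact aux_key μ N (fun r => {ω | P i ω ≤ u r})
            (fun r => {ω | max 1 (Rc ω).card ≤ r})
            (fun r => (hPmeas i) measurableSet_Iic) hBmeas
            (fun r ω hω => le_trans hω (humono r))
            (fun r ω hω => le_trans hω (Nat.le_succ r))
            (α * A i) (mul_nonneg hα0.le (hA i)) hp' hpos'
  calc ∑ i ∈ H0 ∩ C, ∑ j ∈ Finset.range N,
        (1/((j:ℝ)+1)) * (μ {ω | i ∈ Rc ω ∧ max 1 (Rc ω).card = j+1}).toReal
      ≤ ∑ i ∈ H0 ∩ C, α * A i := Finset.sum_le_sum hper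
    _ = α * ∑ i ∈ H0 ∩ C, A i := by rw [Finset.mul_sum]
    _ ≤ α * ∑ i ∈ C, A i := by
        apply mul_le_mul_of_nonneg_left _ hα0.le
        exact Finset.sum_le_sum_of_subset_of_nonneg (Finset.inter_subset_right)
          (fun i _ _ => hA i)
    _ ≤ α * 1 := mul_le_mul_of_nonneg_left hAsum hα0.le
    _ = α := mul_one α
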